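/- Let V be a real inner product space with orthogonal almost complex structure J, S : V × V → ℝ a symmetric bilinear form, and define ψ(S)(x,y,z,u) = g(x,Ju)S(y,Jz) - g(x,Jz)S(y,Ju) - 2g(x,Jy)S(z,Ju) + g(y,Jz)S(x,Ju) - g(y,Ju)S(x,Jz) - 2g(z,Ju)S(x,Jy). If S(Jx,Jy) = S(x,y) for all x,y, then ψ(S) is a curvature-like tensor: antisymmetric in the first two and last two arguments, symmetric under pair exchange, and satisfying the first Bianchi identity. -/
import Mathlib


open RealInnerProductSpace

noncomputable def psi {V : Type*} [NormedAddCommGroup V] [InnerProductSpace ℝ V]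
    (J : V →ₗ[ℝ] V) (S : V →ₗ[ℝ] V →ₗ[ℝ] ℝ) : V → V → V → V → ℝ :=
  fun x y z u =>
    ⟪x, J u⟫ * S y (J z) - ⟪x, J z⟫ * S y (J u) - 2 * ⟪x, J y⟫ * S z (J u)
    + ⟪y, J z⟫ * S x (J u) - ⟪y, J u⟫ * S x (J z) - 2 * ⟪z, J u⟫ * S x (J y)

theorem psi_curvature_like
    {V : Type*} [NormedAddCommGroup V] [InnerProductSpace ℝ V] [FiniteDimensional ℝ V]
    (J : V →ₗ[ℝ] V) (hJ2 : ∀ x, J (J x) = -x) (hJg : ∀ x y, ⟪J x, J y⟫ = ⟪x, y⟫)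
    (S : V →ₗ[ℝ] V →ₗ[ℝ] ℝ) (hSsymm : ∀ x y, S x y = S y x)
    (hSJ : ∀ x y, S (J x) (J y) = S x y) :
    (∀ x y z u : V, psi J S x y z u = - psi J S y x z u) ∧
    (∀ x y z u : V, psi J S x y z u = - psi J S x y u z) ∧
    (∀ x y z u : V, psi J S x y z u = psi J S z u x y) ∧
    (∀ x y z u : V, psi J S x y z u + psi J S y z x u + psi J S z x y u = 0) := by
  have hA : ∀ a b : V, ⟪a, J b⟫ = -⟪b, J a⟫ := by
    intro a b
    calc ⟪a, J b⟫ = ⟪J a, J (J b)⟫ := (hJg a (J b)).symm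
      _ = ⟪J a, -b⟫ := by rw [hJ2]
      _ = -⟪b, J a⟫ := by rw [inner_neg_right, real_inner_comm]
  have hB : ∀ a b : V, S a (J b) = -S b (J a) := by
    intro a b
    calc S a (J b) = S (J a) (J (J b)) := (hSJ a (J b)).symm
      _ = S (J a) (-b) := by rw [hJ2]
      _ = -S b (J a) := by rw [map_neg, hSsymm (J a) b]
  refine ⟨fun x y z u => ?_, fun x y z u => ?_, fun x y z u => ?_, fun x y z u => ?_⟩
  · simp only [psi]; rw [hA y x, hB y x]; ring
  · simp only [psi]; rw [hA u z, hB u z]; ring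
  · simp only [psi]; rw [hA z y, hA z x, hA u x, hA u y, hB u x, hB u y, hB z y, hB z x]; ring
  · simp only [psi]; rw [hB z x, hA y x, hA z x, hB y x, hA z y, hB z y]; ring
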